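/- Let Θ ⊆ ℝ^d be nonempty with diameter at most D, let X = (x₁,…,xₙ) ∈ (ℝ^d)^n with geometric median θ⋆ ∈ Θ, let F(θ) = Σᵢ ‖θ - xᵢ‖, and let 3·Δ_{3n/4}(θ⋆) + 2D ≤ Δ for some Δ > 0 and n ≥ 4. Let X̃ be a neighboring dataset (differing in one point) with geometric median θ⊛. Then for every θ ∈ Θ, |[F(θ; X) - F(θ⋆; X)] - [F(θ; X̃) - F(θ⊛; X̃)]| ≤ Δ. -/

import Mathlib

open Finset

section Helpers

variable {V : Type*} [NormedAddCommGroup V] [InnerProductSpace ℝ V]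

/-- Elementary: `‖p - y‖ - ‖q - y‖ ≤ ‖p - q‖`. -/
lemma gm_norm_diff_le (p q y : V) : ‖p - y‖ - ‖q - y‖ ≤ ‖p - q‖ := by
  have h := norm_sub_norm_le (p - y) (q - y)
  have h2 : (p - y) - (q - y) = p - q := by abel
  rw [h2] at h
  linarith

/-- Key per-point bound for "far" points: `‖v‖ - ‖c - v‖ ≤ ⟪v, c⟫ / ‖v‖`. -/
lemma gm_far_bound (v c : V) (hv : v ≠ 0) :
    ‖v‖ - ‖c - v‖ ≤ (inner ℝ v c : ℝ) / ‖v‖ := by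
  have hA : (0:ℝ) < ‖v‖ := norm_pos_iff.2 hv
  rw [le_div_iff₀ hA]
  -- goal : (‖v‖ - ‖c - v‖) * ‖v‖ ≤ ⟪v, c⟫
  have hB2 : ‖c - v‖ ^ 2 = ‖c‖ ^ 2 - 2 * (inner ℝ v c : ℝ) + ‖v‖ ^ 2 := by
    rw [@norm_sub_sq_real V _ _ c v, real_inner_comm c v]
  have hCS : ((inner ℝ v c : ℝ))^2 ≤ ‖v‖^2 * ‖c‖^2 := by
    have := abs_real_inner_le_norm v c
    nlinarith [abs_nonneg (inner ℝ v c : ℝ), neg_abs_le (inner ℝ v c : ℝ), le_abs_self (inner ℝ v c : ℝ)]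
  rcases le_or_gt (‖v‖^2 - (inner ℝ v c : ℝ)) 0 with hc | hc
  · nlinarith [mul_nonneg (norm_nonneg (c - v)) hA.le]
  · have hsq : (‖v‖^2 - (inner ℝ v c : ℝ))^2 ≤ (‖v‖ * ‖c - v‖)^2 := by
      nlinarith [sq_nonneg ‖v‖]
    have hprod : ‖v‖^2 - (inner ℝ v c : ℝ) ≤ ‖v‖ * ‖c - v‖ := by
      nlinarith [mul_nonneg hA.le (norm_nonneg (c - v))]
    nlinarith

end Helpers

section KeyLemma

variable {V : Type*} [NormedAddCommGroup V] [InnerProductSpace ℝ V]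

set_option maxHeartbeats 1000000 in
/-- Main structural lemma: value-sensitivity of the geometric-median objective.
For any point `θc` (in particular the neighboring median),
`F(θs; X̃) - F(θc; X̃) ≤ 3 r` where at least `3n/4` points of `X` are within `r` of `θs`. -/
lemma gm_value_gap {n : ℕ} (hn : 4 ≤ n) (x xt : Fin n → V) (j : Fin n)
    (hneighbor : ∀ i, i ≠ j → x i = xt i)
    (θs θc : V)
    (hθs : IsMinOn (fun θ => ∑ i, ‖θ - x i‖) Set.univ θs)
    (r : ℝ) (hr : 0 ≤ r)
    (hm : 3 * (n : ℝ) / 4 ≤ ((univ.filter fun i => ‖x i - θs‖ ≤ r).card : ℝ)) :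
    (∑ i, ‖θs - xt i‖) - (∑ i, ‖θc - xt i‖) ≤ 3 * r := by
  classical
  set t : ℝ := ‖θc - θs‖ with ht_def
  have ht0 : 0 ≤ t := norm_nonneg _
  -- split off the j-th coordinate
  have hsum_p : ∀ p : V, (∑ i, ‖p - xt i‖)
      = (∑ i ∈ univ.erase j, ‖p - x i‖) + ‖p - xt j‖ := by
    intro p
    rw [← Finset.sum_erase_add _ _ (mem_univ j)]
    congr 1
    refine Finset.sum_congr rfl (fun i hi => ?_)
    rw [hneighbor i (Finset.ne_of_mem_erase hi)]
  have hXopt : (∑ i, ‖θs - x i‖) ≤ ∑ i, ‖θc - x i‖ :=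
    isMinOn_iff.mp hθs θc (Set.mem_univ θc)
  have hsplitX : ∀ p : V, (∑ i, ‖p - x i‖)
      = (∑ i ∈ univ.erase j, ‖p - x i‖) + ‖p - x j‖ := by
    intro p
    rw [← Finset.sum_erase_add _ _ (mem_univ j)]
  have hu : ‖θs - xt j‖ - ‖θc - xt j‖ ≤ t := by
    have h := gm_norm_diff_le θs θc (xt j)
    have h2 : ‖θs - θc‖ = t := norm_sub_rev θs θc
    linarith
  rw [hsum_p θs, hsum_p θc]
  rcases le_or_gt t (3 * r / 2) with hcase | hcase
  · -- easy case: t ≤ 3r/2, use global optimality of θs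
    have hj : ‖θc - x j‖ - ‖θs - x j‖ ≤ t := by
      have := gm_norm_diff_le θc θs (x j)
      linarith [this]
    have hE : (∑ i ∈ univ.erase j, ‖θs - x i‖) - (∑ i ∈ univ.erase j, ‖θc - x i‖) ≤ t := by
      have h1 := hsplitX θs
      have h2 := hsplitX θc
      linarith [hXopt]
    linarith
  · -- main case : t > 3r/2
    have ht : (0:ℝ) < t := lt_of_le_of_lt (by linarith) hcase
    set c : V := θc - θs with hc_def
    have hc_norm : ‖c‖ = t := rfl
    set e : V := t⁻¹ • c with he_def
    have he : ‖e‖ = 1 := by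
      rw [he_def, norm_smul, norm_inv, Real.norm_of_nonneg ht0, hc_norm]
      field_simp
    have hce : (inner ℝ c e : ℝ) = t := by
      rw [he_def, real_inner_smul_right, real_inner_self_eq_norm_sq, hc_norm]
      field_simp
    -- the score function
    set s : Fin n → ℝ := fun i => if x i = θs then -1 else (inner ℝ (x i - θs) e : ℝ) / ‖x i - θs‖
      with hs_def
    have hs_bound : ∀ i, |s i| ≤ 1 := by
      intro i
      by_cases hxi : x i = θs
      · simp [hs_def, hxi]
      · have hA : (0:ℝ) < ‖x i - θs‖ := norm_pos_iff.2 (sub_ne_zero.2 hxi)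
        have hCS : |(inner ℝ (x i - θs) e : ℝ)| ≤ ‖x i - θs‖ := by
          have := abs_real_inner_le_norm (x i - θs) e
          rwa [he, mul_one] at this
        rw [hs_def]
        simp only [hxi, if_false]
        rw [abs_div, abs_of_pos hA, div_le_one hA]
        exact hCS
    have hs_lb : ∀ i, -1 ≤ s i := fun i => neg_le_of_abs_le (hs_bound i)
    have hs_ub : ∀ i, s i ≤ 1 := fun i => le_of_abs_le (hs_bound i)
    -- first-order optimality : ∑ s ≤ 0
    set cc : Fin n → ℝ := fun i => if x i = θs then 0 else ‖x i - θs‖⁻¹ with hcc_def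
    have hcc0 : ∀ i, 0 ≤ cc i := by
      intro i
      rw [hcc_def]
      by_cases hxi : x i = θs <;> simp [hxi, inv_nonneg.2 (norm_nonneg _)]
    set C : ℝ := ∑ i, cc i with hC_def
    have hC0 : 0 ≤ C := Finset.sum_nonneg (fun i _ => hcc0 i)
    have hkey : ∀ ε : ℝ, 0 < ε → (∑ i, s i) ≤ ε * C := by
      intro ε hε
      have hper : ∀ i, ‖(θs + ε • e) - x i‖ ≤ ‖θs - x i‖ - ε * s i + ε^2 * cc i := by
        intro i
        by_cases hxi : x i = θs
        · have : (θs + ε • e) - x i = ε • e := by rw [hxi]; abel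
          rw [this, hxi, norm_smul, he, sub_self, norm_zero, Real.norm_of_nonneg hε.le]
          simp [hs_def, hcc_def, hxi]
        · set v : V := x i - θs with hv_def
          have hv : v ≠ 0 := sub_ne_zero.2 hxi
          have hA : (0:ℝ) < ‖v‖ := norm_pos_iff.2 hv
          set A : ℝ := ‖v‖ with hA_def
          set δ : ℝ := (inner ℝ v e : ℝ) with hδ_def
          have hδA : |δ| ≤ A := by
            have := abs_real_inner_le_norm v e
            rwa [he, mul_one] at this
          have hrw : (θs + ε • e) - x i = ε • e - v := by rw [hv_def]; abel
          have hLHS2 : ‖ε • e - v‖^2 = ε^2 - 2 * ε * δ + A^2 := by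
            rw [@norm_sub_sq_real V _ _ (ε • e) v, norm_smul, Real.norm_of_nonneg hε.le, he,
              real_inner_smul_left]
            rw [hδ_def, real_inner_comm v e]
            ring
          have hsv : s i = δ / A := by rw [hs_def]; simp [hxi, hδ_def, hv_def, hA_def]
          have hccv : cc i = A⁻¹ := by rw [hcc_def]; simp [hxi, hv_def, hA_def]
          have hnorm_sub : ‖θs - x i‖ = A := by rw [hA_def, hv_def, norm_sub_rev]
          rw [hrw, hnorm_sub, hsv, hccv]
          have hRHS : A - ε * (δ / A) + ε^2 * A⁻¹ = (A^2 - ε * δ + ε^2) / A := by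
            field_simp
          rw [hRHS]
          have hnum : 0 < A^2 - ε * δ + ε^2 := by
            nlinarith [sq_nonneg (A - ε), abs_le.mp hδA]
          have hRHSpos : 0 < (A^2 - ε * δ + ε^2) / A := div_pos hnum hA
          have hsq : ‖ε • e - v‖^2 ≤ ((A^2 - ε * δ + ε^2) / A)^2 := by
            rw [hLHS2, div_pow]
            rw [le_div_iff₀ (by positivity : (0:ℝ) < A^2)]
            nlinarith [sq_nonneg (δ - ε), sq_nonneg ε, sq_nonneg (ε * (δ - ε))]
          nlinarith [norm_nonneg (ε • e - v), hRHSpos, hsq]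
      have hmin := isMinOn_iff.mp hθs (θs + ε • e) (Set.mem_univ _)
      have hsum : (∑ i, ‖(θs + ε • e) - x i‖)
          ≤ (∑ i, ‖θs - x i‖) - ε * (∑ i, s i) + ε^2 * C := by
        rw [hC_def, Finset.mul_sum, Finset.mul_sum, ← Finset.sum_sub_distrib,
          ← Finset.sum_add_distrib]
        exact Finset.sum_le_sum (fun i _ => hper i)
      have : ε * (∑ i, s i) ≤ ε^2 * C := by
        linarith
      have h2 : ε * (∑ i, s i) ≤ ε * (ε * C) := by nlinarith
      exact le_of_mul_le_mul_left h2 hε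
    have hsum_s : (∑ i, s i) ≤ 0 := by
      by_contra hpos
      push_neg at hpos
      set S0 : ℝ := ∑ i, s i with hS0
      have hS0pos : 0 < S0 := hpos
      have hεpos : 0 < S0 / (2 * (C + 1)) := by positivity
      have := hkey _ hεpos
      rw [div_mul_eq_mul_div, le_div_iff₀ (by positivity : (0:ℝ) < 2 * (C + 1))] at this
      nlinarith [mul_nonneg hS0pos.le hC0]
    -- per-point bounds
    have hBrel : ∀ i, θc - x i = c - (x i - θs) := by intro i; rw [hc_def]; abel
    have hfar : ∀ i, ‖θs - x i‖ - ‖θc - x i‖ ≤ t * s i := by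
      intro i
      by_cases hxi : x i = θs
      · have h1 : ‖θs - x i‖ = 0 := by rw [hxi, sub_self, norm_zero]
        have h2 : ‖θc - x i‖ = t := by rw [hxi]
        rw [h1, h2]
        simp [hs_def, hxi]
      · set v : V := x i - θs with hv_def
        have hv : v ≠ 0 := sub_ne_zero.2 hxi
        have hfb := gm_far_bound v c hv
        have h1 : ‖θs - x i‖ = ‖v‖ := by rw [hv_def, norm_sub_rev]
        have h2 : ‖θc - x i‖ = ‖c - v‖ := by rw [hBrel i]
        have hvc : (inner ℝ v c : ℝ) = t * (inner ℝ v e : ℝ) := by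
          have : c = t • e := by
            rw [he_def, smul_smul, mul_inv_cancel₀ (ne_of_gt ht), one_smul]
          rw [this, real_inner_smul_right]
        have hsv : s i = (inner ℝ v e : ℝ) / ‖v‖ := by rw [hs_def]; simp [hxi, hv_def]
        rw [h1, h2, hsv]
        calc ‖v‖ - ‖c - v‖ ≤ (inner ℝ v c : ℝ) / ‖v‖ := hfb
          _ = t * ((inner ℝ v e : ℝ) / ‖v‖) := by rw [hvc]; ring
    have hclus : ∀ i, ‖x i - θs‖ ≤ r → ‖θs - x i‖ - ‖θc - x i‖ ≤ r * s i + r - t := by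
      intro i hir
      by_cases hxi : x i = θs
      · have h1 : ‖θs - x i‖ = 0 := by rw [hxi, sub_self, norm_zero]
        have h2 : ‖θc - x i‖ = t := by rw [hxi]
        rw [h1, h2]
        simp only [hs_def, hxi, if_true]
        ring_nf
        linarith
      · set v : V := x i - θs with hv_def
        have hv : v ≠ 0 := sub_ne_zero.2 hxi
        have hA : (0:ℝ) < ‖v‖ := norm_pos_iff.2 hv
        set δ : ℝ := (inner ℝ v e : ℝ) with hδ_def
        -- ‖c - v‖ ≥ t - δ
        have hB_lb : t - δ ≤ ‖c - v‖ := by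
          have h1 : (inner ℝ (c - v) e : ℝ) ≤ ‖c - v‖ := by
            have := real_inner_le_norm (c - v) e
            rwa [he, mul_one] at this
          have h2 : (inner ℝ (c - v) e : ℝ) = t - δ := by
            rw [inner_sub_left, hδ_def]
            have : (inner ℝ c e : ℝ) = t := hce
            rw [this]
          linarith [h1, h2.symm.le]
        have hsv : s i = δ / ‖v‖ := by rw [hs_def]; simp [hxi, hδ_def, hv_def]
        have hδv : δ = ‖v‖ * s i := by rw [hsv]; field_simp
        have h1 : ‖θs - x i‖ = ‖v‖ := by rw [hv_def, norm_sub_rev]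
        have h2 : ‖θc - x i‖ = ‖c - v‖ := by rw [hBrel i]
        have hs1 : -1 ≤ s i := hs_lb i
        have hvr : ‖v‖ ≤ r := hir
        rw [h1, h2]
        -- ‖v‖ - ‖c-v‖ ≤ ‖v‖ - t + δ = (1 + s i)‖v‖ - t ≤ (1 + s i) r - t
        have : (1 + s i) * ‖v‖ ≤ (1 + s i) * r :=
          mul_le_mul_of_nonneg_left hvr (by linarith)
        nlinarith [hB_lb]
    -- aggregation
    set Ss : Finset (Fin n) := univ.filter (fun i => ‖x i - θs‖ ≤ r) with hSs_def
    set Ssj : Finset (Fin n) := Ss.erase j with hSsj_def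
    set Ej : Finset (Fin n) := univ.erase j with hEj_def
    have hsub : Ssj ⊆ Ej := by
      rw [hSsj_def, hEj_def]
      exact Finset.erase_subset_erase j (Finset.subset_univ Ss)
    set Fs : Finset (Fin n) := Ej \ Ssj with hFs_def
    set T : ℝ := ∑ i ∈ Ssj, s i with hT_def
    set U : ℝ := ∑ i ∈ Fs, s i with hU_def
    set k : ℝ := (Ssj.card : ℝ) with hk_def
    have hcardEj : (Ej.card : ℝ) = (n : ℝ) - 1 := by
      rw [hEj_def, Finset.card_erase_of_mem (mem_univ j), Finset.card_univ, Fintype.card_fin]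
      have : 1 ≤ n := by omega
      push_cast [Nat.cast_sub this]
      ring
    have hcardFs : (Fs.card : ℝ) = (n : ℝ) - 1 - k := by
      rw [hFs_def, Finset.card_sdiff_of_subset hsub]
      have h1 : Ssj.card ≤ Ej.card := Finset.card_le_card hsub
      push_cast [Nat.cast_sub h1]
      rw [hk_def]
      push_cast
      linarith [hcardEj]
    have hkm : 3 * (n : ℝ) / 4 - 1 ≤ k := by
      have h1 : (Ss.card : ℝ) - 1 ≤ k := by
        rw [hk_def, hSsj_def]
        by_cases hjs : j ∈ Ss
        · rw [Finset.card_erase_of_mem hjs]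
          have hcard1 : 1 ≤ Ss.card := Finset.card_pos.2 ⟨j, hjs⟩
          push_cast [Nat.cast_sub hcard1]
          linarith
        · rw [Finset.erase_eq_of_notMem hjs]
          linarith
      rw [hSs_def] at h1
      linarith [hm]
    -- sum over Ej splits
    have hEsplit : ∀ f : Fin n → ℝ, (∑ i ∈ Ej, f i) = (∑ i ∈ Fs, f i) + (∑ i ∈ Ssj, f i) := by
      intro f
      rw [hFs_def]
      exact (Finset.sum_sdiff hsub).symm
    have hSsum : (∑ i ∈ Ssj, (‖θs - x i‖ - ‖θc - x i‖)) ≤ r * T + k * (r - t) := by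
      have h1 : (∑ i ∈ Ssj, (‖θs - x i‖ - ‖θc - x i‖))
          ≤ ∑ i ∈ Ssj, (r * s i + (r - t)) := by
        refine Finset.sum_le_sum (fun i hi => ?_)
        have hiS : i ∈ Ss := Finset.mem_of_mem_erase (by rwa [hSsj_def] at hi)
        have hir : ‖x i - θs‖ ≤ r := by
          rw [hSs_def] at hiS
          exact (Finset.mem_filter.mp hiS).2
        have := hclus i hir
        linarith
      rw [Finset.sum_add_distrib, Finset.sum_const, ← Finset.mul_sum] at h1
      rw [hT_def, hk_def]
      have : (Ssj.card : ℝ) * (r - t) = Ssj.card • (r - t) := by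
        rw [nsmul_eq_mul]
      linarith [h1, this.symm.le, this.le]
    have hFsum : (∑ i ∈ Fs, (‖θs - x i‖ - ‖θc - x i‖)) ≤ t * U := by
      have h1 : (∑ i ∈ Fs, (‖θs - x i‖ - ‖θc - x i‖)) ≤ ∑ i ∈ Fs, t * s i :=
        Finset.sum_le_sum (fun i _ => hfar i)
      rw [← Finset.mul_sum] at h1
      rw [hU_def]
      exact h1
    -- constraints on T, U
    have hT_lb : -k ≤ T := by
      rw [hT_def, hk_def]
      have : (∑ _i ∈ Ssj, (-1 : ℝ)) ≤ ∑ i ∈ Ssj, s i :=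
        Finset.sum_le_sum (fun i _ => hs_lb i)
      rw [Finset.sum_const, nsmul_eq_mul] at this
      linarith
    have hU_ub1 : U ≤ (n : ℝ) - 1 - k := by
      rw [hU_def]
      have : (∑ i ∈ Fs, s i) ≤ ∑ _i ∈ Fs, (1 : ℝ) :=
        Finset.sum_le_sum (fun i _ => hs_ub i)
      rw [Finset.sum_const, nsmul_eq_mul, mul_one] at this
      linarith [hcardFs.symm.le, hcardFs.le]
    have hTU : T + U ≤ 1 := by
      have h1 : (∑ i ∈ Ej, s i) + s j = ∑ i, s i := by
        rw [hEj_def]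
        exact Finset.sum_erase_add _ _ (mem_univ j)
      have h2 := hEsplit s
      have h3 := hs_lb j
      rw [hT_def, hU_def]
      linarith [hsum_s]
    -- final arithmetic
    have hNk : 2 * k - (n : ℝ) ≥ 0 := by
      have : (4:ℝ) ≤ (n:ℝ) := by exact_mod_cast hn
      linarith [hkm]
    have hEj_bound : (∑ i ∈ Ej, (‖θs - x i‖ - ‖θc - x i‖)) ≤ r * T + k * (r - t) + t * U := by
      rw [hEsplit (fun i => ‖θs - x i‖ - ‖θc - x i‖)]
      linarith [hSsum, hFsum]
    have hgoal : t + (r * T + k * (r - t) + t * U) ≤ 3 * r := by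
      have hN4 : (4:ℝ) ≤ (n:ℝ) := by exact_mod_cast hn
      have hrt : r < t := by linarith
      rcases le_or_gt T (k + 2 - (n:ℝ)) with hT | hT
      · have hp1 : r * T ≤ r * (k + 2 - (n:ℝ)) := mul_le_mul_of_nonneg_left hT hr
        have hp2 : t * U ≤ t * ((n:ℝ) - 1 - k) := mul_le_mul_of_nonneg_left hU_ub1 ht0
        have hp3 : t * ((n:ℝ) - 2*k) ≤ (3*r/2) * ((n:ℝ) - 2*k) := by
          have h1 : (n:ℝ) - 2*k ≤ 0 := by linarith
          exact mul_le_mul_of_nonpos_right (by linarith) h1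
        have hp5 : r * ((n:ℝ)/2 - k - 1) ≤ 0 := by
          have h1 : (n:ℝ)/2 - k - 1 ≤ 0 := by linarith
          exact mul_nonpos_of_nonneg_of_nonpos hr h1
        linarith
      · have hq1 : t * U ≤ t * (1 - T) := by
          have : U ≤ 1 - T := by linarith
          exact mul_le_mul_of_nonneg_left this ht0
        have hq2 : (r - t) * T ≤ (r - t) * (k + 2 - (n:ℝ)) := by
          have h1 : r - t ≤ 0 := by linarith
          exact mul_le_mul_of_nonpos_left hT.le h1
        have hp3 : t * ((n:ℝ) - 2*k) ≤ (3*r/2) * ((n:ℝ) - 2*k) := by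
          have h1 : (n:ℝ) - 2*k ≤ 0 := by linarith
          exact mul_le_mul_of_nonpos_right (by linarith) h1
        have hp5 : r * ((n:ℝ)/2 - k - 1) ≤ 0 := by
          have h1 : (n:ℝ)/2 - k - 1 ≤ 0 := by linarith
          exact mul_nonpos_of_nonneg_of_nonpos hr h1
        linarith
    -- conclude
    have hEj2 : (∑ i ∈ univ.erase j, ‖θs - x i‖) - (∑ i ∈ univ.erase j, ‖θc - x i‖)
        = ∑ i ∈ Ej, (‖θs - x i‖ - ‖θc - x i‖) := by
      rw [hEj_def, Finset.sum_sub_distrib]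
    linarith [hEj_bound, hgoal, hu, hEj2.le, hEj2.symm.le]

end KeyLemma

/-- Two-sided sensitivity bound for the centered geometric-median loss over a set `Θ`
of diameter at most `D`: if `3·Δ_{3n/4}(θ⋆) + 2D ≤ Δ` and `n ≥ 4`, then for neighboring
datasets the centered losses differ by at most `Δ` at every `θ ∈ Θ`. -/
theorem stmt_14 (d n : ℕ) (hn : 4 ≤ n)
    (Θ : Set (EuclideanSpace ℝ (Fin d))) (hΘ : Θ.Nonempty)
    (D : ℝ) (hD : ∀ u ∈ Θ, ∀ v ∈ Θ, ‖u - v‖ ≤ D)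
    (x xt : Fin n → EuclideanSpace ℝ (Fin d)) (j : Fin n)
    (hneighbor : ∀ i, i ≠ j → x i = xt i)
    (θs θc : EuclideanSpace ℝ (Fin d)) (hθsΘ : θs ∈ Θ)
    (hθs : IsMinOn (fun θ => ∑ i, ‖θ - x i‖) Set.univ θs)
    (hθc : IsMinOn (fun θ => ∑ i, ‖θ - xt i‖) Set.univ θc)
    (Δq Δ : ℝ)
    (hΔq : IsLeast {r : ℝ | 0 ≤ r ∧
        3 * (n : ℝ) / 4 ≤ ((univ.filter fun i => ‖x i - θs‖ ≤ r).card : ℝ)} Δq)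
    (hΔ : 0 < Δ) (hΔge : 3 * Δq + 2 * D ≤ Δ) :
    ∀ θ ∈ Θ,
      |((∑ i, ‖θ - x i‖) - ∑ i, ‖θs - x i‖) - ((∑ i, ‖θ - xt i‖) - ∑ i, ‖θc - xt i‖)|
        ≤ Δ := by
  intro θ hθΘ
  obtain ⟨⟨hΔq0, hΔqcard⟩, -⟩ := hΔq
  have hD0 : 0 ≤ D := by
    have := hD θs hθsΘ θs hθsΘ
    simp at this
    linarith
  have hθθs : ‖θ - θs‖ ≤ D := hD θ hθΘ θs hθsΘ
  -- collapse lemma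
  have hcollapse : ∀ p : EuclideanSpace ℝ (Fin d),
      (∑ i, ‖p - x i‖) - (∑ i, ‖p - xt i‖) = ‖p - x j‖ - ‖p - xt j‖ := by
    intro p
    rw [← Finset.sum_sub_distrib]
    refine Finset.sum_eq_single_of_mem j (mem_univ j) (fun i _ hij => ?_)
    rw [hneighbor i hij, sub_self]
  have hθcmin : (∑ i, ‖θc - xt i‖) ≤ ∑ i, ‖θs - xt i‖ :=
    isMinOn_iff.mp hθc θs (Set.mem_univ θs)
  have hE : (∑ i, ‖θs - xt i‖) - (∑ i, ‖θc - xt i‖) ≤ 3 * Δq :=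
    gm_value_gap hn x xt j hneighbor θs θc hθs Δq hΔq0 hΔqcard
  -- norm difference bounds
  have h1 : ‖θ - x j‖ - ‖θs - x j‖ ≤ D := le_trans (gm_norm_diff_le θ θs (x j)) hθθs
  have h2 : ‖θs - x j‖ - ‖θ - x j‖ ≤ D := by
    have h := gm_norm_diff_le θs θ (x j)
    have h' : ‖θs - θ‖ = ‖θ - θs‖ := norm_sub_rev θs θ
    linarith
  have h3 : ‖θ - xt j‖ - ‖θs - xt j‖ ≤ D := le_trans (gm_norm_diff_le θ θs (xt j)) hθθs
  have h4 : ‖θs - xt j‖ - ‖θ - xt j‖ ≤ D := by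
    have h := gm_norm_diff_le θs θ (xt j)
    have h' : ‖θs - θ‖ = ‖θ - θs‖ := norm_sub_rev θs θ
    linarith
  have hgθ := hcollapse θ
  have hgθs := hcollapse θs
  rw [abs_le]
  constructor
  · -- -Δ ≤ A  i.e.  -A ≤ Δ
    nlinarith [hE, h2, h3, hgθ, hgθs]
  · -- A ≤ Δ : uses hθcmin
    nlinarith [hθcmin, h1, h4, hgθ, hgθs]
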